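/- Let f : ℝ^d → ℝ be twice continuously differentiable, λ ≥ 0, and Φ(x) = f(x) + λ‖x‖₁. Suppose x* is a stationary point of Φ, i.e., for every coordinate i: if x*ᵢ ≠ 0 then (∇f(x*))ᵢ = −λ·sign(x*ᵢ), and if x*ᵢ = 0 then |(∇f(x*))ᵢ| ≤ λ. If in addition the Hessian ∇²f(x*) is positive definite (⟨v, ∇²f(x*)v⟩ > 0 for all v ≠ 0), then x* is a strict local minimizer of Φ: there is a neighborhood U of x* such that Φ(x) > Φ(x*) for all x ∈ U with x ≠ x*. -/

import Mathlib

open scoped RealInnerProductSpace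

/-- The Hessian of `f` at `x`, as the Fréchet derivative of the gradient. -/
noncomputable def hess {d : ℕ} (f : EuclideanSpace ℝ (Fin d) → ℝ)
    (x : EuclideanSpace ℝ (Fin d)) :
    EuclideanSpace ℝ (Fin d) →L[ℝ] EuclideanSpace ℝ (Fin d) :=
  fderiv ℝ (gradient f) x

/-- Coordinates are bounded by the Euclidean norm. -/
lemma abs_coord_le_norm' {d : ℕ} (h : EuclideanSpace ℝ (Fin d)) (i : Fin d) : |h i| ≤ ‖h‖ := by
  rw [EuclideanSpace.norm_eq]
  have h1 : |h i| = Real.sqrt (‖h i‖ ^ 2) := by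
    rw [Real.norm_eq_abs, Real.sqrt_sq_eq_abs, abs_abs]
  rw [h1]
  apply Real.sqrt_le_sqrt
  exact Finset.single_le_sum (f := fun j => ‖h j‖ ^ 2) (fun j _ => by positivity)
    (Finset.mem_univ i)

/-- Uniform positive definiteness of the Hessian near a point where it is positive definite. -/
lemma uniform_pd {d : ℕ} (hd : 1 ≤ d) (f : EuclideanSpace ℝ (Fin d) → ℝ)
    (hf : ContDiff ℝ 2 f) (xs : EuclideanSpace ℝ (Fin d))
    (hPD : ∀ v : EuclideanSpace ℝ (Fin d), v ≠ 0 → 0 < ⟪v, hess f xs v⟫) :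
    ∃ μ > 0, ∃ r > 0, ∀ y ∈ Metric.ball xs r, ∀ v : EuclideanSpace ℝ (Fin d),
      μ * ‖v‖ ^ 2 ≤ ⟪v, hess f y v⟫ := by
  haveI : Nonempty (Fin d) := ⟨⟨0, hd⟩⟩
  have hgrad : ContDiff ℝ 1 (gradient f) := by
    have h1 : ContDiff ℝ 1 (fderiv ℝ f) := hf.fderiv_right (by norm_num)
    exact ((InnerProductSpace.toDual ℝ _).symm.contDiff).comp h1
  have hHc : Continuous fun y => hess f y := hgrad.continuous_fderiv one_ne_zero
  have hsc : IsCompact (Metric.sphere (0 : EuclideanSpace ℝ (Fin d)) 1) := isCompact_sphere _ _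
  have hsne : (Metric.sphere (0 : EuclideanSpace ℝ (Fin d)) 1).Nonempty := by
    refine ⟨EuclideanSpace.single ⟨0, hd⟩ 1, ?_⟩
    simp [EuclideanSpace.norm_single]
  have hcont : Continuous fun v : EuclideanSpace ℝ (Fin d) => ⟪v, hess f xs v⟫ :=
    continuous_id.inner (hess f xs).continuous
  obtain ⟨u, hu, humin⟩ := hsc.exists_isMinOn hsne hcont.continuousOn
  set μ₀ : ℝ := ⟪u, hess f xs u⟫ with hμ₀
  have hune : u ≠ 0 := by
    intro h0
    have := mem_sphere_zero_iff_norm.mp hu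
    rw [h0] at this; simp at this
  have hμ₀pos : 0 < μ₀ := hPD u hune
  have hsphere : ∀ v : EuclideanSpace ℝ (Fin d), μ₀ * ‖v‖ ^ 2 ≤ ⟪v, hess f xs v⟫ := by
    intro v
    rcases eq_or_ne v 0 with rfl | hv
    · simp
    · have hvn : 0 < ‖v‖ := norm_pos_iff.mpr hv
      set w : EuclideanSpace ℝ (Fin d) := ‖v‖⁻¹ • v with hw
      have hwmem : w ∈ Metric.sphere (0 : EuclideanSpace ℝ (Fin d)) 1 := by
        simp [hw, norm_smul, abs_of_pos (inv_pos.mpr hvn), inv_mul_cancel₀ hvn.ne']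
      have hmin : ⟪u, hess f xs u⟫ ≤ ⟪w, hess f xs w⟫ := humin hwmem
      have hcalc : ⟪w, hess f xs w⟫ = ‖v‖⁻¹ * ‖v‖⁻¹ * ⟪v, hess f xs v⟫ := by
        have hmap : ⟪w, hess f xs w⟫ = ⟪‖v‖⁻¹ • v, ‖v‖⁻¹ • (hess f xs v)⟫ := by
          rw [hw, map_smul]
        rw [hmap, real_inner_smul_left, real_inner_smul_right]; ring
      rw [hcalc] at hmin
      have h2 : μ₀ * ‖v‖ ^ 2 ≤ (‖v‖⁻¹ * ‖v‖⁻¹ * ⟪v, hess f xs v⟫) * ‖v‖ ^ 2 := by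
        nlinarith [sq_nonneg ‖v‖]
      calc μ₀ * ‖v‖ ^ 2 ≤ (‖v‖⁻¹ * ‖v‖⁻¹ * ⟪v, hess f xs v⟫) * ‖v‖ ^ 2 := h2
        _ = (‖v‖⁻¹ * ‖v‖) ^ 2 * ⟪v, hess f xs v⟫ := by ring
        _ = ⟪v, hess f xs v⟫ := by rw [inv_mul_cancel₀ hvn.ne']; ring
  have hev : ∀ᶠ y in nhds xs, ‖hess f y - hess f xs‖ < μ₀ / 2 := by
    have hcn : Continuous fun y => ‖hess f y - hess f xs‖ := (hHc.sub continuous_const).norm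
    have h0 : (fun y => ‖hess f y - hess f xs‖) xs = 0 := by simp
    exact (hcn.continuousAt (x := xs)).eventually_lt_const
      (by rw [h0]; positivity : (fun y => ‖hess f y - hess f xs‖) xs < μ₀ / 2)
  obtain ⟨r, hrpos, hr⟩ := Metric.eventually_nhds_iff_ball.mp hev
  refine ⟨μ₀ / 2, by positivity, r, hrpos, fun y hy v => ?_⟩
  have hb := hr y hy
  have hbd : |⟪v, (hess f y - hess f xs) v⟫| ≤ ‖hess f y - hess f xs‖ * ‖v‖ ^ 2 := by
    calc |⟪v, (hess f y - hess f xs) v⟫| ≤ ‖v‖ * ‖(hess f y - hess f xs) v‖ :=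
          abs_real_inner_le_norm _ _
      _ ≤ ‖v‖ * (‖hess f y - hess f xs‖ * ‖v‖) :=
          mul_le_mul_of_nonneg_left ((hess f y - hess f xs).le_opNorm v) (norm_nonneg _)
      _ = ‖hess f y - hess f xs‖ * ‖v‖ ^ 2 := by ring
  have hsplit : ⟪v, hess f y v⟫ = ⟪v, hess f xs v⟫ + ⟪v, (hess f y - hess f xs) v⟫ := by
    simp [inner_add_right, ContinuousLinearMap.sub_apply, inner_sub_right]
  have h1 := hsphere v
  have h2 : -(‖hess f y - hess f xs‖ * ‖v‖ ^ 2) ≤ ⟪v, (hess f y - hess f xs) v⟫ := by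
    have := (abs_le.mp hbd).1
    linarith
  have h3 : ‖hess f y - hess f xs‖ * ‖v‖ ^ 2 ≤ μ₀ / 2 * ‖v‖ ^ 2 :=
    mul_le_mul_of_nonneg_right hb.le (sq_nonneg _)
  rw [hsplit]
  nlinarith [sq_nonneg ‖v‖]

/-- Strict growth of `f` above its tangent plane on a ball where the Hessian is uniformly
positive definite. -/
lemma strict_growth {d : ℕ} (f : EuclideanSpace ℝ (Fin d) → ℝ) (hf : ContDiff ℝ 2 f)
    (xs x : EuclideanSpace ℝ (Fin d)) (μ r : ℝ) (hμpos : 0 < μ)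
    (hkey : ∀ y ∈ Metric.ball xs r, ∀ v : EuclideanSpace ℝ (Fin d),
      μ * ‖v‖ ^ 2 ≤ ⟪v, hess f y v⟫)
    (hx : x ∈ Metric.ball xs r) (hne : x ≠ xs) :
    f xs + ⟪x - xs, gradient f xs⟫ < f x := by
  have hgrad : ContDiff ℝ 1 (gradient f) := by
    have h1 : ContDiff ℝ 1 (fderiv ℝ f) := hf.fderiv_right (by norm_num)
    exact ((InnerProductSpace.toDual ℝ _).symm.contDiff).comp h1
  have hgdiff : Differentiable ℝ (gradient f) := hgrad.differentiable one_ne_zero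
  have hH : ∀ y, HasFDerivAt (gradient f) (hess f y) y := fun y => (hgdiff y).hasFDerivAt
  set h : EuclideanSpace ℝ (Fin d) := x - xs with hh
  have hhne : h ≠ 0 := sub_ne_zero.mpr hne
  have hhn : 0 < ‖h‖ := norm_pos_iff.mpr hhne
  have hhr : ‖h‖ < r := by rwa [hh, ← dist_eq_norm, ← Metric.mem_ball]
  have hγ : ∀ t : ℝ, HasDerivAt (fun s : ℝ => xs + s • h) h t := by
    intro t
    simpa using ((hasDerivAt_id t).smul_const h).const_add xs
  have hmemball : ∀ t : ℝ, t ∈ Set.Icc (0:ℝ) 1 → xs + t • h ∈ Metric.ball xs r := by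
    intro t ht
    rw [Metric.mem_ball, dist_eq_norm]
    have heq : ‖xs + t • h - xs‖ = |t| * ‖h‖ := by
      simp [norm_smul, Real.norm_eq_abs]
    rw [heq]
    have h1 : |t| ≤ 1 := abs_le.mpr ⟨by linarith [ht.1], ht.2⟩
    calc |t| * ‖h‖ ≤ 1 * ‖h‖ := mul_le_mul_of_nonneg_right h1 (norm_nonneg _)
      _ = ‖h‖ := one_mul _
      _ < r := hhr
  set ψ : ℝ → ℝ := fun t => ⟪h, gradient f (xs + t • h)⟫ with hψdef
  have hψ : ∀ t : ℝ, HasDerivAt ψ (⟪h, hess f (xs + t • h) h⟫) t := by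
    intro t
    have h1 : HasDerivAt (fun s : ℝ => gradient f (xs + s • h)) (hess f (xs + t • h) h) t :=
      by have := (hH (xs + t • h)).comp_hasDerivAt t (hγ t); exact this
    have := ((innerSL ℝ h).hasFDerivAt.comp_hasDerivAt t h1)
    exact this
  have hφ : ∀ t : ℝ, HasDerivAt (fun s : ℝ => f (xs + s • h)) (ψ t) t := by
    intro t
    have hg : HasFDerivAt f (InnerProductSpace.toDual ℝ _ (gradient f (xs + t • h)))
        (xs + t • h) := ((hf.differentiable (by norm_num)) _).hasGradientAt.hasFDerivAt
    have h3 : (InnerProductSpace.toDual ℝ _ (gradient f (xs + t • h))) h = ψ t := by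
      rw [InnerProductSpace.toDual_apply_apply]; exact real_inner_comm _ _
    exact h3 ▸ (hg.comp_hasDerivAt t (hγ t))
  obtain ⟨c, hc, hceq⟩ := exists_hasDerivAt_eq_slope (fun s : ℝ => f (xs + s • h)) ψ
    (by norm_num : (0:ℝ) < 1)
    (fun t _ => (hφ t).continuousAt.continuousWithinAt)
    (fun t _ => hφ t)
  obtain ⟨ξ, hξ, hξeq⟩ := exists_hasDerivAt_eq_slope ψ (fun t => ⟪h, hess f (xs + t • h) h⟫)
    hc.1 (fun t _ => (hψ t).continuousAt.continuousWithinAt) (fun t _ => hψ t)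
  have hmem : xs + ξ • h ∈ Metric.ball xs r :=
    hmemball ξ ⟨(hξ.1).le, le_trans hξ.2.le hc.2.le⟩
  have hpos : 0 < ⟪h, hess f (xs + ξ • h) h⟫ :=
    lt_of_lt_of_le (by positivity) (hkey _ hmem h)
  have hψ0 : ψ 0 = ⟪h, gradient f xs⟫ := by simp [hψdef]
  have hslope1 : ψ c = f x - f xs := by
    have hc2 := hceq
    simp only [one_smul, zero_smul, add_zero, sub_zero, div_one] at hc2
    rw [hc2, hh]
    simp
  have hslope2 : ψ c - ψ 0 = c * ⟪h, hess f (xs + ξ • h) h⟫ := by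
    rw [hξeq, sub_zero]; field_simp [hc.1.ne']
  have hfin : 0 < ψ c - ψ 0 := by
    rw [hslope2]; exact mul_pos hc.1 hpos
  rw [hψ0, hslope1] at hfin
  linarith

/-- A stationary point of `Φ = f + λ‖·‖₁` at which the Hessian of `f` is positive definite is
a strict local minimizer of `Φ`. -/
theorem stationary_posdef_is_strict_local_min (d : ℕ) (hd : 1 ≤ d)
    (f : EuclideanSpace ℝ (Fin d) → ℝ) (hf : ContDiff ℝ 2 f)
    (lam : ℝ) (hlam : 0 ≤ lam)
    (Φ : EuclideanSpace ℝ (Fin d) → ℝ) (hΦ : ∀ x, Φ x = f x + lam * ∑ i, |x i|)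
    (xs : EuclideanSpace ℝ (Fin d))
    (hstat : ∀ i : Fin d,
      (xs i ≠ 0 → gradient f xs i = -lam * Real.sign (xs i)) ∧
      (xs i = 0 → |gradient f xs i| ≤ lam))
    (hPD : ∀ v : EuclideanSpace ℝ (Fin d), v ≠ 0 → 0 < ⟪v, hess f xs v⟫) :
    ∃ U ∈ nhds xs, ∀ x ∈ U, x ≠ xs → Φ xs < Φ x := by
  classical
  haveI : Nonempty (Fin d) := ⟨⟨0, hd⟩⟩
  obtain ⟨μ, hμpos, r, hrpos, hkey⟩ := uniform_pd hd f hf xs hPD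
  -- choose a radius ρ small enough
  set ρ : ℝ := min r ((Finset.univ : Finset (Fin d)).inf' Finset.univ_nonempty
    fun i => if xs i = 0 then r else |xs i|) with hρdef
  have hρpos : 0 < ρ := by
    rw [hρdef]
    refine lt_min hrpos ?_
    rw [Finset.lt_inf'_iff]
    intro i _
    by_cases hxs : xs i = 0
    · simpa [hxs] using hrpos
    · simp only [if_neg hxs]
      exact abs_pos.mpr hxs
  have hρr : ρ ≤ r := min_le_left _ _
  have hρxs : ∀ i, xs i ≠ 0 → ρ ≤ |xs i| := by
    intro i hxs
    refine le_trans (min_le_right _ _) ?_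
    have := Finset.inf'_le (fun i => if xs i = 0 then r else |xs i|) (Finset.mem_univ i)
    simpa only [if_neg hxs] using this
  refine ⟨Metric.ball xs ρ, Metric.ball_mem_nhds xs hρpos, fun x hx hne => ?_⟩
  have hxr : x ∈ Metric.ball xs r := Metric.ball_subset_ball hρr hx
  have hgrow := strict_growth f hf xs x μ r hμpos hkey hxr hne
  -- coordinate part
  have hnorm : ‖x - xs‖ < ρ := by rwa [← dist_eq_norm, ← Metric.mem_ball]
  have hsmall : ∀ i, xs i ≠ 0 → |x i - xs i| < |xs i| := by
    intro i hxs
    have h1 : |x i - xs i| ≤ ‖x - xs‖ := by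
      have := abs_coord_le_norm' (x - xs) i
      simpa using this
    exact lt_of_le_of_lt h1 (lt_of_lt_of_le hnorm (hρxs i hxs))
  set g : EuclideanSpace ℝ (Fin d) := gradient f xs with hgdef
  have hcoord : 0 ≤ ⟪x - xs, g⟫ + lam * ((∑ i, |x i|) - ∑ i, |xs i|) := by
    have hinner : ⟪x - xs, g⟫ = ∑ i, (x i - xs i) * g i := by
      simp [PiLp.inner_apply, RCLike.inner_apply, conj_trivial, mul_comm]
    rw [hinner]
    have hsum : (∑ i, (x i - xs i) * g i) + lam * ((∑ i, |x i|) - ∑ i, |xs i|)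
        = ∑ i, ((x i - xs i) * g i + lam * (|x i| - |xs i|)) := by
      rw [Finset.sum_add_distrib]
      congr 1
      rw [mul_sub, Finset.mul_sum, Finset.mul_sum, ← Finset.sum_sub_distrib]
      exact Finset.sum_congr rfl fun i _ => by rw [mul_sub]
    rw [hsum]
    apply Finset.sum_nonneg
    intro i _
    by_cases hxs : xs i = 0
    · have hb := (hstat i).2 hxs
      rw [hxs, sub_zero, abs_zero, sub_zero]
      have h1 : -( |x i| * |g i| ) ≤ x i * g i := by
        rw [← abs_mul]; exact neg_abs_le _
      have h2 : |x i| * |g i| ≤ |x i| * lam := mul_le_mul_of_nonneg_left hb (abs_nonneg _)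
      nlinarith
    · have hg := (hstat i).1 hxs
      have hs := hsmall i hxs
      rcases lt_trichotomy (xs i) 0 with hneg | hzero | hpos
      · have hsign : Real.sign (xs i) = -1 := Real.sign_of_neg hneg
        have habs : |xs i| = -xs i := abs_of_neg hneg
        have hxlt : x i < 0 := by
          have := (abs_lt.mp hs).2
          rw [habs] at this; linarith
        rw [hg, hsign, abs_of_neg hxlt, habs]
        nlinarith [mul_comm (x i - xs i) lam]
      · exact absurd hzero hxs
      · have hsign : Real.sign (xs i) = 1 := Real.sign_of_pos hpos
        have habs : |xs i| = xs i := abs_of_pos hpos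
        have hxgt : 0 < x i := by
          have := (abs_lt.mp hs).1
          rw [habs] at this; linarith
        rw [hg, hsign, abs_of_pos hxgt, habs]
        nlinarith [mul_comm (x i - xs i) lam]
  rw [hΦ, hΦ]
  linarith
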